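/- Conditional entropy lower bound via maximum posterior: For a discrete random variable L on a finite set 𝓛 and a random variable Z with joint distribution, H(L | Z) ≥ −log₂ E_Z[max_{l ∈ 𝓛} P(L = l | Z)]. Consequently, with p_e* = 1 − E_Z[max_l P(L = l | Z)] the Bayes error, I(L; Z) ≤ H(L) + log₂(1 − p_e*). -/

import Mathlib

open MeasureTheory Real

/-- Binary entropy function in bits (with the convention `0 * logb 2 0 = 0`,
which holds in Lean since `Real.log 0 = 0`). -/
noncomputable def binEnt (p : ℝ) : ℝ :=
  -p * Real.logb 2 p - (1 - p) * Real.logb 2 (1 - p)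

/-- Shannon entropy (in bits) of a random variable `L` with values in a finite set. -/
noncomputable def prEnt {Ω 𝓛 : Type*} [MeasurableSpace Ω] [Fintype 𝓛]
    (μ : Measure Ω) (L : Ω → 𝓛) : ℝ :=
  ∑ l : 𝓛, -(μ (L ⁻¹' {l})).toReal * Real.logb 2 (μ (L ⁻¹' {l})).toReal

/-- Conditional Shannon entropy (in bits) `H(L | Z)` for finite-valued `L` and `Z`. -/
noncomputable def prCondEnt {Ω 𝓛 β : Type*} [MeasurableSpace Ω] [Fintype 𝓛] [Fintype β]
    (μ : Measure Ω) (L : Ω → 𝓛) (Z : Ω → β) : ℝ :=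
  ∑ z : β, ∑ l : 𝓛,
    -(μ (L ⁻¹' {l} ∩ Z ⁻¹' {z})).toReal *
      Real.logb 2 ((μ (L ⁻¹' {l} ∩ Z ⁻¹' {z})).toReal / (μ (Z ⁻¹' {z})).toReal)

/-- Mutual information (in bits): `I(L; Z) = H(L) - H(L | Z)`. -/
noncomputable def prMutInfo {Ω 𝓛 β : Type*} [MeasurableSpace Ω] [Fintype 𝓛] [Fintype β]
    (μ : Measure Ω) (L : Ω → 𝓛) (Z : Ω → β) : ℝ :=
  prEnt μ L - prCondEnt μ L Z

/-- Bayes (minimum) error probability for classifying `L` from `Z`. -/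
noncomputable def bayesErr {Ω 𝓛 β : Type*} [MeasurableSpace Ω] [Fintype 𝓛] [Fintype β]
    (μ : Measure Ω) (L : Ω → 𝓛) (Z : Ω → β) : ℝ :=
  ⨅ f : β → 𝓛, (μ {ω | L ω ≠ f (Z ω)}).toReal

lemma aux_jensen {𝓛 β : Type*} [Fintype 𝓛] [Nonempty 𝓛] [Fintype β]
    (j : 𝓛 → β → ℝ) (q : β → ℝ)
    (hjnn : ∀ l z, 0 ≤ j l z)
    (hsum : ∀ z, ∑ l, j l z = q z)
    (htot : ∑ z, q z = 1) :
    -Real.logb 2 (∑ z, ⨆ l, j l z) ≤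
      ∑ z : β, ∑ l : 𝓛, -(j l z) * Real.logb 2 (j l z / q z) := by
  classical
  set M : β → ℝ := fun z => ⨆ l, j l z with hM
  have hqnn : ∀ z, 0 ≤ q z := fun z => (hsum z) ▸ Finset.sum_nonneg fun l _ => hjnn l z
  have hjq : ∀ l z, j l z ≤ q z := by
    intro l z
    rw [← hsum z]
    exact Finset.single_le_sum (fun l _ => hjnn l z) (Finset.mem_univ l)
  have hMle : ∀ l z, j l z ≤ M z := fun l z =>
    le_ciSup (Set.Finite.bddAbove (Set.finite_range fun l => j l z)) l
  have hMq : ∀ z, M z ≤ q z := fun z => ciSup_le fun l => hjq l z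
  have hMnn : ∀ z, 0 ≤ M z := fun z =>
    le_trans (hjnn (Classical.arbitrary 𝓛) z) (hMle _ z)
  have hMpos : ∀ z, 0 < q z → 0 < M z := by
    intro z hqz
    by_contra h
    push_neg at h
    have hj0 : ∀ l, j l z = 0 := fun l => le_antisymm ((hMle l z).trans h) (hjnn l z)
    rw [← hsum z] at hqz
    simp [hj0] at hqz
  have hj0 : ∀ z, q z = 0 → ∀ l, j l z = 0 := fun z hz l =>
    le_antisymm (hz ▸ hjq l z) (hjnn l z)
  have hM0 : ∀ z, q z = 0 → M z = 0 := fun z hz =>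
    le_antisymm (hz ▸ hMq z) (hMnn z)
  set T : Finset β := Finset.univ.filter fun z => 0 < q z with hT
  have hTmem : ∀ z, z ∈ T ↔ 0 < q z := by
    intro z; simp [hT]
  have hout : ∀ z, z ∉ T → q z = 0 := by
    intro z hz
    have := (hTmem z).not.mp hz
    exact le_antisymm (not_lt.1 this) (hqnn z)
  have hT1 : ∑ z ∈ T, q z = 1 := by
    rw [← htot]
    exact Finset.sum_subset (Finset.filter_subset _ _) fun z _ hz => hout z hz
  have hSM : ∑ z ∈ T, M z = ∑ z, M z :=
    Finset.sum_subset (Finset.filter_subset _ _) fun z _ hz => hM0 z (hout z hz)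
  -- concavity of logb 2
  have hconc : ConcaveOn ℝ (Set.Ioi (0:ℝ)) (Real.logb 2) := by
    have h := strictConcaveOn_log_Ioi.concaveOn.smul
      (le_of_lt (inv_pos.2 (Real.log_pos one_lt_two)))
    have e : Real.logb 2 = fun x => (Real.log 2)⁻¹ • Real.log x := by
      funext x
      simp [Real.logb, div_eq_inv_mul]
    rw [e]; exact h
  have jensen := hconc.le_map_sum (t := T) (w := q) (p := fun z => M z / q z)
    (fun z _ => hqnn z) hT1
    (fun z hz => Set.mem_Ioi.2 (div_pos (hMpos z ((hTmem z).1 hz)) ((hTmem z).1 hz)))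
  have hpt : ∑ z ∈ T, q z • (M z / q z) = ∑ z, M z := by
    rw [← hSM]
    refine Finset.sum_congr rfl fun z hz => ?_
    have hqz := (hTmem z).1 hz
    rw [smul_eq_mul, mul_div_cancel₀ _ (ne_of_gt hqz)]
  rw [hpt] at jensen
  -- Step A: inner bound for z ∈ T
  have innerA : ∀ z ∈ T, -(q z) * Real.logb 2 (M z / q z) ≤
      ∑ l, -(j l z) * Real.logb 2 (j l z / q z) := by
    intro z hz
    have hqz := (hTmem z).1 hz
    have hre : -(q z) * Real.logb 2 (M z / q z) =
        ∑ l, -(j l z) * Real.logb 2 (M z / q z) := by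
      rw [← hsum z]
      rw [← Finset.sum_neg_distrib, Finset.sum_mul]
    rw [hre]
    refine Finset.sum_le_sum fun l _ => ?_
    rcases eq_or_lt_of_le (hjnn l z) with h | h
    · simp [← h]
    · have hlog : Real.logb 2 (j l z / q z) ≤ Real.logb 2 (M z / q z) :=
        Real.logb_le_logb_of_le one_lt_two (div_pos h hqz)
          (div_le_div_of_nonneg_right (hMle l z) hqz.le)
      nlinarith
  -- combine
  have hfull : ∑ z ∈ T, ∑ l, -(j l z) * Real.logb 2 (j l z / q z) =
      ∑ z, ∑ l, -(j l z) * Real.logb 2 (j l z / q z) := by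
    refine Finset.sum_subset (Finset.filter_subset _ _) fun z _ hz => ?_
    have := hout z hz
    refine Finset.sum_eq_zero fun l _ => by simp [hj0 z this l]
  calc -Real.logb 2 (∑ z, M z)
      ≤ -(∑ z ∈ T, q z • Real.logb 2 (M z / q z)) := neg_le_neg jensen
    _ = ∑ z ∈ T, -(q z) * Real.logb 2 (M z / q z) := by
        rw [← Finset.sum_neg_distrib]
        exact Finset.sum_congr rfl fun z _ => by rw [smul_eq_mul, neg_mul]
    _ ≤ ∑ z ∈ T, ∑ l, -(j l z) * Real.logb 2 (j l z / q z) :=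
        Finset.sum_le_sum innerA
    _ = ∑ z, ∑ l, -(j l z) * Real.logb 2 (j l z / q z) := hfull

/-- `H(L | Z) ≥ -log₂ E_Z[max_l P(L = l | Z)]` (note
`E_Z[max_l P(L = l | Z)] = ∑_z max_l P(L = l, Z = z)`); consequently, with
`p_e* = 1 - E_Z[max_l P(L = l | Z)]`, `I(L; Z) ≤ H(L) + log₂(1 - p_e*)`. -/
theorem condEnt_ge_neg_log_expected_max_posterior {Ω 𝓛 β : Type*} [MeasurableSpace Ω]
    [Fintype 𝓛] [Nonempty 𝓛] [MeasurableSpace 𝓛] [MeasurableSingletonClass 𝓛]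
    [Fintype β] [MeasurableSpace β] [MeasurableSingletonClass β]
    (μ : Measure Ω) [IsProbabilityMeasure μ]
    (L : Ω → 𝓛) (Z : Ω → β) (hL : Measurable L) (hZ : Measurable Z) :
    -Real.logb 2 (∑ z : β, ⨆ l : 𝓛, (μ (L ⁻¹' {l} ∩ Z ⁻¹' {z})).toReal) ≤ prCondEnt μ L Z ∧
    prMutInfo μ L Z ≤ prEnt μ L +
      Real.logb 2 (1 - (1 - ∑ z : β, ⨆ l : 𝓛, (μ (L ⁻¹' {l} ∩ Z ⁻¹' {z})).toReal)) := by
  classical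
  have hsum : ∀ z : β, ∑ l : 𝓛, (μ (L ⁻¹' {l} ∩ Z ⁻¹' {z})).toReal
      = (μ (Z ⁻¹' {z})).toReal := by
    intro z
    have hU : Z ⁻¹' {z} = ⋃ l, (L ⁻¹' {l} ∩ Z ⁻¹' {z}) := by
      ext ω; simp
    have hdisj : Pairwise (Function.onFun Disjoint
        fun l : 𝓛 => L ⁻¹' {l} ∩ Z ⁻¹' {z}) := by
      intro a b hab
      refine Set.disjoint_left.2 ?_
      rintro ω ⟨ha, -⟩ ⟨hb, -⟩
      simp only [Set.mem_preimage, Set.mem_singleton_iff] at ha hb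
      exact hab (ha ▸ hb ▸ rfl)
    have hmeas : ∀ l : 𝓛, MeasurableSet (L ⁻¹' {l} ∩ Z ⁻¹' {z}) := fun l =>
      (hL (measurableSet_singleton l)).inter (hZ (measurableSet_singleton z))
    have h1 : μ (Z ⁻¹' {z}) = ∑ l : 𝓛, μ (L ⁻¹' {l} ∩ Z ⁻¹' {z}) := by
      conv_lhs => rw [hU]
      rw [measure_iUnion hdisj hmeas, tsum_fintype]
    rw [h1, ENNReal.toReal_sum fun l _ => measure_ne_top μ _]
  have htot : ∑ z : β, (μ (Z ⁻¹' {z})).toReal = 1 := by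
    have hU : (Set.univ : Set Ω) = ⋃ z, Z ⁻¹' {z} := by
      ext ω; simp
    have hdisj : Pairwise (Function.onFun Disjoint fun z : β => Z ⁻¹' {z}) := by
      intro a b hab
      refine Set.disjoint_left.2 ?_
      intro ω ha hb
      simp only [Set.mem_preimage, Set.mem_singleton_iff] at ha hb
      exact hab (ha ▸ hb ▸ rfl)
    have h1 : (1 : ENNReal) = ∑ z : β, μ (Z ⁻¹' {z}) := by
      rw [← measure_univ (μ := μ), hU, measure_iUnion hdisj
        (fun z => hZ (measurableSet_singleton z)), tsum_fintype]
    have := congrArg ENNReal.toReal h1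
    rw [ENNReal.toReal_sum fun z _ => measure_ne_top μ _] at this
    simpa using this.symm
  have key := aux_jensen (fun l z => (μ (L ⁻¹' {l} ∩ Z ⁻¹' {z})).toReal)
    (fun z => (μ (Z ⁻¹' {z})).toReal) (fun l z => ENNReal.toReal_nonneg) hsum htot
  have key' : -Real.logb 2 (∑ z : β, ⨆ l : 𝓛, (μ (L ⁻¹' {l} ∩ Z ⁻¹' {z})).toReal)
      ≤ prCondEnt μ L Z := key
  refine ⟨key', ?_⟩
  have h2 : (1 : ℝ) - (1 - ∑ z : β, ⨆ l : 𝓛, (μ (L ⁻¹' {l} ∩ Z ⁻¹' {z})).toReal)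
      = ∑ z : β, ⨆ l : 𝓛, (μ (L ⁻¹' {l} ∩ Z ⁻¹' {z})).toReal := by ring
  rw [h2]
  unfold prMutInfo
  linarith [key']
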